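/- Let n ≥ 3, 1 ≤ i ≤ n−1, 0 ≤ t ≤ n−1 with i + t ≤ n, and let A = {α ∈ ℕ^n : |α| = n, α_{t+1} + ... + α_{t+i} ≤ i + 1}. If α ∈ ℕ^n satisfies α_k ≥ 1 for all k, n | |α|, and (i+1)(Σ_{k≤t} α_k + Σ_{k>t+i} α_k) − (n−i−1)(Σ_{k=t+1}^{t+i} α_k) ≥ gcd(n, i+1), then α − (1,...,1) lies in the submonoid of ℕ^n generated by A. -/

import Mathlib

/-- From a vector `β` and a finset `s` with `c ≤ ∑_{k∈s} β k`, extract `γ ≤ β`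
supported on `s` with sum exactly `c`. -/
lemma stmt17_exists_part {n : ℕ} (β : Fin n → ℕ) (s : Finset (Fin n)) (c : ℕ)
    (hc : c ≤ ∑ k ∈ s, β k) :
    ∃ γ : Fin n → ℕ, (∀ k, γ k ≤ β k) ∧ (∀ k, k ∉ s → γ k = 0) ∧ ∑ k ∈ s, γ k = c := by
  induction c with
  | zero => exact ⟨0, fun k => Nat.zero_le _, fun k _ => rfl, by simp⟩
  | succ c ih =>
    obtain ⟨γ, h1, h2, h3⟩ := ih (le_of_lt (Nat.lt_of_succ_le hc))
    have hlt : ∑ k ∈ s, γ k < ∑ k ∈ s, β k := by omega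
    obtain ⟨k, hk, hkb⟩ : ∃ k ∈ s, γ k < β k := by
      by_contra h
      push_neg at h
      exact absurd (Finset.sum_le_sum fun k hk => h k hk) (not_le.mpr hlt)
    refine ⟨fun j => γ j + if j = k then 1 else 0, fun j => ?_, fun j hj => ?_, ?_⟩
    · by_cases hjk : j = k
      · subst hjk; simpa using hkb
      · simpa [hjk] using h1 j
    · have hjk : j ≠ k := fun h => hj (h ▸ hk)
      simp [h2 j hj, hjk]
    · rw [Finset.sum_add_distrib, h3, Finset.sum_ite_eq' s k (fun _ => 1), if_pos hk]

lemma stmt17_card_filter (n t i : ℕ) (hit : t + i ≤ n) :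
    (Finset.univ.filter (fun m : Fin n => t ≤ m.val ∧ m.val < t + i)).card = i := by
  have h : (Finset.univ.filter (fun m : Fin n => t ≤ m.val ∧ m.val < t + i)).map
      Fin.valEmbedding = Finset.Ico t (t + i) := by
    ext x
    simp only [Finset.mem_map, Finset.mem_filter, Finset.mem_univ, true_and,
      Fin.valEmbedding_apply, Finset.mem_Ico]
    constructor
    · rintro ⟨m, hm, rfl⟩; exact hm
    · rintro ⟨h1, h2⟩; exact ⟨⟨x, lt_of_lt_of_le h2 hit⟩, ⟨h1, h2⟩, rfl⟩
  have := congrArg Finset.card h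
  rwa [Finset.card_map, Nat.card_Ico, Nat.add_sub_cancel_left] at this

/-- Main induction: a vector summing to `m*n` with in-sum at most `m*(i+1)`
is a sum of `m` generators. -/
lemma stmt17_key {n i : ℕ} (hi : i + 1 ≤ n) (s : Finset (Fin n)) (m : ℕ) (β : Fin n → ℕ)
    (hsum : ∑ k, β k = m * n)
    (hin : ∑ k ∈ s, β k ≤ m * (i + 1)) :
    β ∈ AddSubmonoid.closure {α : Fin n → ℕ | ∑ k, α k = n ∧ ∑ k ∈ s, α k ≤ i + 1} := by
  induction m generalizing β with
  | zero =>
    have hβ0 : β = 0 := by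
      funext k
      have := (Finset.sum_eq_zero_iff.mp (by rw [zero_mul] at hsum; exact hsum)) k (Finset.mem_univ k)
      simpa using this
    rw [hβ0]; exact zero_mem _
  | succ m ih =>
    obtain ⟨X, hX⟩ : ∃ X, m * (i + 1) = X := ⟨_, rfl⟩
    obtain ⟨Y, hY⟩ : ∃ Y, m * n = Y := ⟨_, rfl⟩
    have hXY : X ≤ Y := by rw [← hX, ← hY]; exact Nat.mul_le_mul_left m hi
    rw [add_mul, one_mul, hY] at hsum
    rw [add_mul, one_mul, hX] at hin
    set SI := ∑ k ∈ s, β k with hSI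
    set SO := ∑ k ∈ sᶜ, β k with hSO
    have htot : SI + SO = Y + n := by
      rw [hSI, hSO, Finset.sum_add_sum_compl]; exact hsum
    set c := SI - min SI X with hc
    obtain ⟨γ₁, hγ₁le, hγ₁0, hγ₁sum⟩ := stmt17_exists_part β s c (Nat.sub_le _ _)
    have hSOc : n - c ≤ SO := by omega
    obtain ⟨γ₂, hγ₂le, hγ₂0, hγ₂sum⟩ := stmt17_exists_part β sᶜ (n - c) hSOc
    have hγ₁out : ∑ k ∈ sᶜ, γ₁ k = 0 :=
      Finset.sum_eq_zero fun k hk => hγ₁0 k (Finset.mem_compl.mp hk)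
    have hγ₂in : ∑ k ∈ s, γ₂ k = 0 :=
      Finset.sum_eq_zero fun k hk => hγ₂0 k (by simpa using hk)
    have hle : ∀ k, γ₁ k + γ₂ k ≤ β k := by
      intro k
      by_cases hk : k ∈ s
      · have := hγ₂0 k (by simpa using hk)
        have := hγ₁le k
        omega
      · have := hγ₁0 k hk
        have := hγ₂le k
        omega
    have hcn : c ≤ n := by omega
    have hγsum : ∑ k, (γ₁ k + γ₂ k) = n := by
      rw [Finset.sum_add_distrib, ← Finset.sum_add_sum_compl s γ₁,
        ← Finset.sum_add_sum_compl s γ₂, hγ₁sum, hγ₁out, hγ₂sum, hγ₂in]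
      omega
    have hγin : ∑ k ∈ s, (γ₁ k + γ₂ k) ≤ i + 1 := by
      rw [Finset.sum_add_distrib, hγ₁sum, hγ₂in]
      omega
    set β' : Fin n → ℕ := fun k => β k - (γ₁ k + γ₂ k) with hβ'
    have hβk : ∀ k, β k = β' k + (γ₁ k + γ₂ k) := by
      intro k
      have := hle k
      simp only [hβ']
      omega
    have hsplit : ∀ u : Finset (Fin n), ∑ k ∈ u, β k = ∑ k ∈ u, β' k + ∑ k ∈ u, (γ₁ k + γ₂ k) := by
      intro u
      rw [← Finset.sum_add_distrib]
      exact Finset.sum_congr rfl fun k _ => hβk k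
    have hsum' : ∑ k, β' k = m * n := by
      have h1 := hsplit Finset.univ
      rw [hY]
      have h2 : ∑ k, β k = Y + n := hsum
      omega
    have hin' : ∑ k ∈ s, β' k ≤ m * (i + 1) := by
      have h1 := hsplit s
      have h2 : ∑ k ∈ s, (γ₁ k + γ₂ k) = c := by
        rw [Finset.sum_add_distrib, hγ₁sum, hγ₂in]; omega
      rw [hX]
      omega
    have hmem : (fun k => γ₁ k + γ₂ k) ∈
        {α : Fin n → ℕ | ∑ k, α k = n ∧ ∑ k ∈ s, α k ≤ i + 1} := ⟨hγsum, hγin⟩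
    have : β = β' + fun k => γ₁ k + γ₂ k := funext fun k => hβk k
    rw [this]
    exact add_mem (ih β' hsum' hin') (AddSubmonoid.subset_closure hmem)

theorem stmt17 (n i t : ℕ) (hn : 3 ≤ n) (hi1 : 1 ≤ i) (hi2 : i ≤ n - 1)
    (ht : t ≤ n - 1) (hit : i + t ≤ n)
    (A : Set (Fin n → ℕ))
    (hA : A = {α | ∑ k, α k = n ∧
      ∑ k ∈ Finset.univ.filter (fun m : Fin n => t ≤ m.val ∧ m.val < t + i), α k ≤ i + 1})
    (α : Fin n → ℕ) (hpos : ∀ k, 1 ≤ α k) (hdvd : n ∣ ∑ k, α k)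
    (hineq : (Nat.gcd n (i + 1) : ℤ) ≤
      (i + 1 : ℤ) *
          ∑ k ∈ Finset.univ.filter (fun m : Fin n => ¬ (t ≤ m.val ∧ m.val < t + i)), (α k : ℤ)
        - ((n : ℤ) - i - 1) *
          ∑ k ∈ Finset.univ.filter (fun m : Fin n => t ≤ m.val ∧ m.val < t + i), (α k : ℤ)) :
    (fun k => α k - 1) ∈ AddSubmonoid.closure A := by
  subst hA
  set s := Finset.univ.filter (fun m : Fin n => t ≤ m.val ∧ m.val < t + i) with hs
  set s' := Finset.univ.filter (fun m : Fin n => ¬ (t ≤ m.val ∧ m.val < t + i)) with hs'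
  have hi' : i + 1 ≤ n := by omega
  have hcard : s.card = i := by
    rw [hs]; exact stmt17_card_filter n t i (by omega)
  obtain ⟨m, hm⟩ := hdvd
  have hge : n ≤ ∑ k, α k := by
    calc n = ∑ _k : Fin n, 1 := by simp
    _ ≤ ∑ k, α k := Finset.sum_le_sum fun k _ => hpos k
  rcases m with _ | mm
  · rw [Nat.mul_zero] at hm; omega
  set S := ∑ k ∈ s, α k with hSdef
  set T := ∑ k ∈ s', α k with hTdef
  have hST : S + T = n * (mm + 1) := by
    rw [hSdef, hTdef, hs, hs', Finset.sum_filter_add_sum_filter_not]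
    exact hm
  -- derive S + 1 ≤ (i+1)*(mm+1) from hineq
  have hcastS : ∑ k ∈ s, (α k : ℤ) = (S : ℤ) := by rw [hSdef]; push_cast; rfl
  have hcastT : ∑ k ∈ s', (α k : ℤ) = (T : ℤ) := by rw [hTdef]; push_cast; rfl
  rw [hcastS, hcastT] at hineq
  have hgcd : (1 : ℤ) ≤ (Nat.gcd n (i + 1) : ℤ) := by
    have : 0 < Nat.gcd n (i + 1) := Nat.gcd_pos_of_pos_right _ (by omega)
    exact_mod_cast this
  have hSTz : (S : ℤ) + (T : ℤ) = (n : ℤ) * (mm + 1) := by exact_mod_cast hST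
  have hident : (i + 1 : ℤ) * (T : ℤ) - ((n : ℤ) - i - 1) * (S : ℤ)
      = (n : ℤ) * ((i + 1) * (mm + 1) - S) := by linear_combination (i + 1 : ℤ) * hSTz
  have hD : (1 : ℤ) ≤ (i + 1 : ℤ) * (mm + 1) - (S : ℤ) := by
    by_contra h
    push_neg at h
    have h0 : (i + 1 : ℤ) * (mm + 1) - (S : ℤ) ≤ 0 := by omega
    have h1 : (n : ℤ) * ((i + 1) * (mm + 1) - S) ≤ 0 :=
      mul_nonpos_of_nonneg_of_nonpos (by positivity) h0
    linarith [hineq, hgcd, hident.trans_le h1]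
  have hSnat : S + 1 ≤ (i + 1) * (mm + 1) := by exact_mod_cast by linarith [hD]
  -- set up key lemma hypotheses
  have hαk : ∀ k, α k = (α k - 1) + 1 := fun k => (Nat.sub_add_cancel (hpos k)).symm
  have hsumβ : ∑ k, (α k - 1) = mm * n := by
    have h1 : ∑ k, α k = ∑ k, (α k - 1) + n := by
      calc ∑ k, α k = ∑ k, ((α k - 1) + 1) := Finset.sum_congr rfl fun k _ => hαk k
      _ = ∑ k, (α k - 1) + ∑ _k : Fin n, 1 := Finset.sum_add_distrib
      _ = ∑ k, (α k - 1) + n := by simp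
    obtain ⟨Y, hY⟩ : ∃ Y, mm * n = Y := ⟨_, rfl⟩
    have h2 : ∑ k, α k = Y + n := by
      rw [hm, Nat.mul_succ, mul_comm n mm, hY]
    rw [hY]
    omega
  have hinβ : ∑ k ∈ s, (α k - 1) ≤ mm * (i + 1) := by
    have h1 : S = ∑ k ∈ s, (α k - 1) + i := by
      calc S = ∑ k ∈ s, ((α k - 1) + 1) := Finset.sum_congr rfl fun k _ => hαk k
      _ = ∑ k ∈ s, (α k - 1) + ∑ _k ∈ s, 1 := Finset.sum_add_distrib
      _ = ∑ k ∈ s, (α k - 1) + i := by rw [Finset.sum_const, smul_eq_mul, mul_one, hcard]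
    obtain ⟨X, hX⟩ : ∃ X, (i + 1) * mm = X := ⟨_, rfl⟩
    have h2 : S + 1 ≤ X + (i + 1) := by rw [← hX, ← Nat.mul_succ]; exact hSnat
    rw [mul_comm, hX]
    omega
  exact stmt17_key hi' s mm (fun k => α k - 1) hsumβ hinβ
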